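/- The formal power series M(x) = (1/4)(−1 + sqrt(1−4x))(−1 + sqrt(1−4x) + 2x) has coefficients [xⁿ]M(x) = 3(2n−4)!/((n−3)! n!) for all n ≥ 3. -/

import Mathlib

open PowerSeries Finset

lemma catalan_range (n : ℕ) :
    catalan (n + 1) = ∑ k ∈ Finset.range (n + 1), catalan k * catalan (n - k) := by
  rw [catalan_succ', Finset.Nat.sum_antidiagonal_eq_sum_range_succ
    (fun i j => catalan i * catalan j)]

lemma coeffS (S : PowerSeries ℚ) (hS0 : S.coeff 0 = 1) (hS : S ^ 2 = 1 - 4 * X) :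
    ∀ n : ℕ, 1 ≤ n → S.coeff n = -2 * catalan (n - 1) := by
  intro n
  induction n using Nat.strong_induction_on with
  | _ n ih =>
  intro hn
  obtain ⟨m, rfl⟩ := Nat.exists_eq_add_of_le' hn
  have key : (S^2).coeff (m + 1) = ((1 - 4*X : PowerSeries ℚ)).coeff (m + 1) := by rw [hS]
  rw [sq, PowerSeries.coeff_mul,
    Finset.Nat.sum_antidiagonal_eq_sum_range_succ (fun i j => S.coeff i * S.coeff j),
    Finset.sum_range_succ, Finset.sum_range_succ'] at key
  cases m with
  | zero =>
    simp only [Finset.range_zero, Finset.sum_empty, zero_add, Nat.sub_self,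
      Nat.sub_zero, hS0, one_mul, mul_one, map_sub, map_one] at key
    have h1 : ((1 : PowerSeries ℚ)).coeff 1 = 0 := by simp [PowerSeries.coeff_one]
    have h2 : ((4 : PowerSeries ℚ) * X).coeff 1 = 4 := by
      rw [PowerSeries.coeff_succ_mul_X]; simp [PowerSeries.coeff_zero_eq_constantCoeff, map_ofNat]
    rw [h1, h2] at key
    simp only [Nat.add_sub_cancel, catalan_zero, Nat.cast_one]
    linarith [key]
  | succ m =>
    have hmid : ∀ k ∈ Finset.range (m+1), S.coeff (k+1) * S.coeff (m+1+1 - (k+1)) =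
        4 * (catalan k * catalan (m - k)) := by
      intro k hk
      rw [Finset.mem_range] at hk
      have h1 : S.coeff (k+1) = -2 * catalan k := by
        rw [ih (k+1) (by omega) (by omega)]; simp
      have h2 : m+1+1 - (k+1) = m + 1 - k := by omega
      have h3 : S.coeff (m + 1 - k) = -2 * catalan (m + 1 - k - 1) := by
        rw [ih (m + 1 - k) (by omega) (by omega)]
      have h4 : m + 1 - k - 1 = m - k := by omega
      rw [h1, h2, h3, h4]; ring
    rw [Finset.sum_congr rfl hmid] at key
    have hsum : ∑ k ∈ Finset.range (m+1), (4 : ℚ) * (catalan k * catalan (m - k)) =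
        4 * catalan (m+1) := by
      rw [← Finset.mul_sum, catalan_range m]
      push_cast
      ring
    have hrhs : ((1 - 4*X : PowerSeries ℚ)).coeff (m+1+1) = 0 := by
      rw [map_sub, PowerSeries.coeff_succ_mul_X]; rw [← map_ofNat (PowerSeries.C (R := ℚ)) 4, PowerSeries.coeff_C]; simp [PowerSeries.coeff_one]
    rw [hsum, hrhs] at key
    simp only [Nat.sub_self, Nat.sub_zero, Nat.add_sub_cancel, hS0, one_mul, mul_one] at key
    simp only [Nat.add_sub_cancel]
    linarith [key]

lemma catalan_cast (k : ℕ) :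
    (catalan k : ℚ) = (2*k).factorial / (k.factorial * (k+1).factorial) := by
  have h := succ_mul_catalan_eq_centralBinom k
  have h' : ((k+1 : ℕ) : ℚ) * catalan k = k.centralBinom := by exact_mod_cast h
  rw [Nat.centralBinom, Nat.cast_choose ℚ (by omega : k ≤ 2*k),
    show 2*k - k = k by omega] at h'
  have hk : (k.factorial : ℚ) ≠ 0 := by exact_mod_cast k.factorial_ne_zero
  have hk1 : ((k+1).factorial : ℚ) ≠ 0 := by exact_mod_cast (k+1).factorial_ne_zero
  have hfs : ((k+1).factorial : ℚ) = (k+1) * k.factorial := by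
    rw [Nat.factorial_succ]; push_cast; ring
  rw [eq_div_iff (by positivity : (k.factorial : ℚ) * k.factorial ≠ 0)] at h'
  rw [hfs, eq_div_iff (by positivity : (k.factorial : ℚ) * ((k+1) * k.factorial) ≠ 0)]
  push_cast at h' ⊢
  linear_combination h'

lemma catalan_diff (m : ℕ) :
    (catalan (m+2) : ℚ) - catalan (m+1) =
      3 * (2*m+2).factorial / (m.factorial * (m+3).factorial) := by
  have e1 : ((m+1).factorial : ℚ) = (m+1) * m.factorial := by
    rw [Nat.factorial_succ]; push_cast; ring
  have e2 : ((m+2).factorial : ℚ) = (m+2) * (m+1) * m.factorial := by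
    rw [show m+2 = (m+1)+1 by ring, Nat.factorial_succ]; push_cast; rw [e1]; ring
  have e3 : ((m+3).factorial : ℚ) = (m+3) * (m+2) * (m+1) * m.factorial := by
    rw [show m+3 = (m+2)+1 by ring, Nat.factorial_succ]; push_cast; rw [e2]; ring
  have e4 : ((2*(m+2)).factorial : ℚ) = (2*m+4) * (2*m+3) * (2*m+2).factorial := by
    rw [show 2*(m+2) = (2*m+3)+1 by ring, Nat.factorial_succ,
      show 2*m+3 = (2*m+2)+1 by ring, Nat.factorial_succ]; push_cast; ring
  rw [catalan_cast, catalan_cast, show 2*(m+1) = 2*m+2 by ring,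
    show (m+1)+1 = m+2 by ring, show (m+2)+1 = m+3 by ring, e4, e3, e2, e1]
  have hm : (m.factorial : ℚ) ≠ 0 := by exact_mod_cast m.factorial_ne_zero
  have h1 : ((m:ℚ)+1) ≠ 0 := by positivity
  have h2 : ((m:ℚ)+2) ≠ 0 := by positivity
  have h3 : ((m:ℚ)+3) ≠ 0 := by positivity
  field_simp
  ring


open PowerSeries in
/-- The formal power series `M(x) = (1/4)(−1 + sqrt(1−4x))(−1 + sqrt(1−4x) + 2x)`
has coefficients `[xⁿ]M(x) = 3(2n−4)!/((n−3)! n!)` for all `n ≥ 3`.  Here `S`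
is the formal square root of `1 − 4x` with constant term `1`. -/
theorem M2_coefficients (S : PowerSeries ℚ)
    (hS0 : S.coeff 0 = 1) (hS : S ^ 2 = 1 - 4 * X) :
    ∀ n : ℕ, 3 ≤ n →
      (((1 : ℚ)/4) • ((-1 + S) * (-1 + S + 2 * X))).coeff n =
        (3 * (2 * n - 4).factorial : ℚ) /
          (((n - 3).factorial : ℚ) * (n.factorial : ℚ)) := by
  intro n hn
  obtain ⟨m, rfl⟩ := Nat.exists_eq_add_of_le' hn
  have hP : (-1 + S) * (-1 + S + 2 * X) =
      C 2 - C 6 * X + C 2 * (X * S) - C 2 * S := by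
    have c2 : (C 2 : ℚ⟦X⟧) = 2 := map_ofNat _ 2
    have c6 : (C 6 : ℚ⟦X⟧) = 6 := map_ofNat _ 6
    rw [c2, c6]
    linear_combination hS
  rw [map_smul, hP]
  have hs1 : S.coeff (m+3) = -2 * catalan (m+2) := by
    rw [coeffS S hS0 hS (m+3) (by omega)]; norm_num
  have hs2 : S.coeff (m+2) = -2 * catalan (m+1) := by
    rw [coeffS S hS0 hS (m+2) (by omega)]; norm_num
  have hXS : (X * S).coeff (m+3) = S.coeff (m+2) := by
    rw [show m+3 = (m+2)+1 by ring, PowerSeries.coeff_succ_X_mul]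
  simp only [map_sub, map_add, PowerSeries.coeff_C_mul, PowerSeries.coeff_C,
    PowerSeries.coeff_X, hXS, hs1, hs2]
  rw [show m + 3 - 3 = m by omega, show 2*(m+3) - 4 = 2*m+2 by omega]
  have := catalan_diff m
  simp only [if_neg (by omega : ¬ m+3 = 0), if_neg (by omega : ¬ m+3 = 1)]
  rw [smul_eq_mul]
  linear_combination this
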